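/- For every integer n ≥ 0 and every complex number y with y ∉ {0, -1, -2, ..., -n}, one has ∑_{k=0}^{n} C(n,k) (-1)^k · k!/((y+1)(y+2)⋯(y+k)) = y/(y+n) (where for k = 0 the empty product (y+1)⋯(y+k) equals 1); that is, the binomial transform of the reciprocals of the generalized binomial coefficients C(k+y,k) = (y+1)⋯(y+k)/k! equals y/(y+n). -/

import Mathlib

open Finset Nat

lemma melzak_aux : ∀ (n m : ℕ) (y : ℂ), (∀ j : ℕ, j ≤ n + m → y + j ≠ 0) →
    ∑ k ∈ Finset.range (n + 1),
        (-1 : ℂ) ^ k * (n.choose k : ℂ) * ((k + m)! : ℂ) / ∏ j ∈ Finset.range (k + m + 1), (y + j)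
      = (m ! : ℂ) / ∏ j ∈ Finset.range (m + 1), (y + (n + j : ℕ)) := by
  intro n
  induction n with
  | zero =>
    intro m y hy
    simp
  | succ n ih =>
    intro m y hy
    set g : ℕ → ℂ := fun k => (-1 : ℂ) ^ k * (n.choose k : ℂ) * ((k + m)! : ℂ) /
      ∏ j ∈ Finset.range (k + m + 1), (y + j) with hg
    set h : ℕ → ℂ := fun k => (-1 : ℂ) ^ k * (n.choose k : ℂ) * ((k + (m+1))! : ℂ) /
      ∏ j ∈ Finset.range (k + (m+1) + 1), (y + j) with hh
    have key : ∑ k ∈ Finset.range (n + 1 + 1),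
        (-1 : ℂ) ^ k * ((n+1).choose k : ℂ) * ((k + m)! : ℂ) / ∏ j ∈ Finset.range (k + m + 1), (y + j)
        = (∑ k ∈ Finset.range (n + 1), g k) - (∑ k ∈ Finset.range (n + 1), h k) := by
      rw [Finset.sum_range_succ']
      have hterm : ∀ k, (-1 : ℂ) ^ (k+1) * ((n+1).choose (k+1) : ℂ) * (((k+1) + m)! : ℂ) /
          ∏ j ∈ Finset.range ((k+1) + m + 1), (y + j) = g (k+1) - h k := by
        intro k
        rw [hg, hh]
        simp only [Nat.choose_succ_succ]
        push_cast
        have e1 : k + 1 + m = k + (m + 1) := by omega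
        rw [e1]
        ring
      calc (∑ k ∈ Finset.range (n+1), (-1 : ℂ) ^ (k+1) * ((n+1).choose (k+1) : ℂ) * (((k+1) + m)! : ℂ) /
              ∏ j ∈ Finset.range ((k+1) + m + 1), (y + j))
            + (-1 : ℂ) ^ 0 * ((n+1).choose 0 : ℂ) * ((0 + m)! : ℂ) / ∏ j ∈ Finset.range (0 + m + 1), (y + j)
          = (∑ k ∈ Finset.range (n+1), (g (k+1) - h k)) + g 0 := by
            rw [Finset.sum_congr rfl (fun k _ => hterm k)]
            congr 1
            simp [hg]
        _ = ((∑ k ∈ Finset.range (n+1), g (k+1)) + g 0) - ∑ k ∈ Finset.range (n+1), h k := by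
            rw [Finset.sum_sub_distrib]; ring
        _ = (∑ k ∈ Finset.range (n+1+1), g k) - ∑ k ∈ Finset.range (n+1), h k := by
            congr 1
            exact (Finset.sum_range_succ' g (n+1)).symm
        _ = (∑ k ∈ Finset.range (n+1), g k) - ∑ k ∈ Finset.range (n+1), h k := by
            rw [Finset.sum_range_succ]
            simp [hg, Nat.choose_succ_self]
    rw [key]
    rw [ih m y (fun j hj => hy j (by omega)), ih (m+1) y (fun j hj => hy j (by omega))]
    -- algebra
    have hyn : y + (n : ℂ) ≠ 0 := by simpa using hy n (by omega)
    have hlast : y + ((n : ℂ) + 1 + m) ≠ 0 := by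
      have h0 := hy (n+1+m) le_rfl
      push_cast at h0
      exact h0
    have hAne : (∏ j ∈ Finset.range m, (y + ((n : ℂ) + 1 + j))) ≠ 0 := by
      rw [Finset.prod_ne_zero_iff]
      intro j hj
      have h0 := hy (n+1+j) (by simp at hj; omega)
      push_cast at h0
      exact h0
    have e1 : ∏ j ∈ Finset.range (m+1), (y + ((n + j : ℕ) : ℂ))
        = (y + (n : ℂ)) * ∏ j ∈ Finset.range m, (y + ((n : ℂ) + 1 + j)) := by
      rw [Finset.prod_range_succ']
      have hc : ∀ j ∈ Finset.range m, (y + ((n + (j+1) : ℕ) : ℂ)) = (y + ((n : ℂ) + 1 + j)) := by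
        intro j _; push_cast; ring
      rw [Finset.prod_congr rfl hc]
      push_cast
      ring
    have e2 : ∏ j ∈ Finset.range (m+1+1), (y + ((n + j : ℕ) : ℂ))
        = (y + (n : ℂ)) * ((∏ j ∈ Finset.range m, (y + ((n : ℂ) + 1 + j))) * (y + ((n : ℂ) + 1 + m))) := by
      rw [Finset.prod_range_succ, e1]
      push_cast
      ring
    have e3 : ∏ j ∈ Finset.range (m+1), (y + ((n + 1 + j : ℕ) : ℂ))
        = (∏ j ∈ Finset.range m, (y + ((n : ℂ) + 1 + j))) * (y + ((n : ℂ) + 1 + m)) := by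
      rw [Finset.prod_range_succ]
      have hc : ∀ j ∈ Finset.range m, (y + ((n + 1 + j : ℕ) : ℂ)) = (y + ((n : ℂ) + 1 + j)) := by
        intro j _; push_cast; ring
      rw [Finset.prod_congr rfl hc]
      push_cast
      ring
    rw [e1, e2, e3, Nat.factorial_succ]
    push_cast
    field_simp
    ring

theorem melzak_inverse_transform (n : ℕ) (y : ℂ)
    (hy : ∀ k ∈ Finset.range (n + 1), y + k ≠ 0) :
    ∑ k ∈ Finset.range (n + 1),
        (n.choose k : ℂ) * (-1) ^ k * ((k ! : ℂ) / ∏ j ∈ Finset.range k, (y + (j + 1))) =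
      y / (y + n) := by
  have h0 : y ≠ 0 := by simpa using hy 0 (by simp)
  have H := melzak_aux n 0 y (fun j hj => hy j (by simp; omega))
  simp only [Nat.add_zero] at H
  have hL : ∑ k ∈ Finset.range (n + 1),
        (n.choose k : ℂ) * (-1) ^ k * ((k ! : ℂ) / ∏ j ∈ Finset.range k, (y + (j + 1)))
      = y * ∑ k ∈ Finset.range (n + 1),
        (-1 : ℂ) ^ k * (n.choose k : ℂ) * ((k)! : ℂ) / ∏ j ∈ Finset.range (k + 1), (y + j) := by
    rw [Finset.mul_sum]
    refine Finset.sum_congr rfl fun k hk => ?_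
    have hP : (∏ j ∈ Finset.range k, (y + ((j : ℂ) + 1))) ≠ 0 := by
      rw [Finset.prod_ne_zero_iff]
      intro j hj
      have := hy (j+1) (by simp at hk hj ⊢; omega)
      push_cast at this
      exact this
    rw [Finset.prod_range_succ']
    have hc : ∀ j ∈ Finset.range k, (y + ((j + 1 : ℕ) : ℂ)) = (y + ((j : ℂ) + 1)) := by
      intro j _; push_cast; ring
    rw [Finset.prod_congr rfl hc]
    push_cast
    field_simp
    ring_nf
    simp [h0]
  rw [hL, H]
  simp [div_eq_mul_inv]
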